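/- Let X be a CAT(0) cube complex embedded as the subset A of intervalic actual points in the cube C ⊆ l¹(H). There is a retraction P : C → A which is 1-Lipschitz for the l¹-metric, restricts to the identity on A, and preserves the l¹-norm on intervalic points. -/

import Mathlib

/-- An abstract model of a CAT(0) cube complex via its halfspace structure: each hyperplane `h`
has an outward halfspace `plus h` not containing the basepoint `x0`; every vertex lies outward
of only finitely many hyperplanes; and every pairwise-consistent orientation differing from the
basepoint orientation in finitely many hyperplanes is realized by a vertex. -/
structure CubeSystem (V H : Type*) where
  plus : H → Set V
  x0 : V
  basepoint : ∀ h, x0 ∉ plus h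
  plus_nonempty : ∀ h, (plus h).Nonempty
  plus_injective : ∀ h k, plus h = plus k → h = k
  vertexFinite : ∀ x : V, {h | x ∈ plus h}.Finite
  lowerFinite : ∀ h, {k | plus h ⊂ plus k}.Finite
  realize : ∀ o : H → Bool, {h | o h = true}.Finite →
    (∀ h k : H,
      ((if o h then plus h else (plus h)ᶜ) ∩ (if o k then plus k else (plus k)ᶜ)).Nonempty) →
    ∃ x : V, ∀ h, x ∈ plus h ↔ o h = true

namespace CubeSystem

variable {V H : Type*} (M : CubeSystem V H)

/-- `h < k`: the outward halfspace of `h` strictly contains that of `k`. -/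
def Lt (h k : H) : Prop := M.plus k ⊂ M.plus h

/-- Two hyperplanes are opposite if their outward halfspaces are disjoint. -/
def Opp (h k : H) : Prop := M.plus h ∩ M.plus k = ∅

/-- The canonical embedding of a vertex into the cube `C ⊆ l¹(H)`: the characteristic
function of the set of hyperplanes separating the basepoint from `x`. -/
noncomputable def vmap (x : V) : H → ℝ := fun h => by
  classical exact if x ∈ M.plus h then 1 else 0

/-- Membership in the cube `C`: finitely supported with values in `[0,1]`. -/
def memC (ξ : H → ℝ) : Prop := (∀ h, ξ h ∈ Set.Icc (0:ℝ) 1) ∧ {h | ξ h ≠ 0}.Finite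

/-- `ξ` is intervalic: for every opposite pair `h, k`, `ξ_h = 0` or `ξ_k = 0`. -/
def Intervalic (ξ : H → ℝ) : Prop := ∀ h k, M.Opp h k → ξ h = 0 ∨ ξ k = 0

/-- `ξ` is actual: for every pair `h < k`, `ξ_h = 1` or `ξ_k = 0`. -/
def Actual (ξ : H → ℝ) : Prop := ∀ h k, M.Lt h k → ξ h = 1 ∨ ξ k = 0

end CubeSystem

noncomputable section
namespace Stmt14
open CubeSystem Finset
open Classical

variable {V H : Type*} (M : CubeSystem V H)

/-! ### basic order facts -/

lemma lt_trans3 {h k j : H} (h1 : M.Lt h k) (h2 : M.Lt k j) : M.Lt h j := h2.trans h1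

lemma lt_irrefl3 (h : H) : ¬ M.Lt h h := fun hh => ssubset_irrefl _ hh

lemma opp_symm3 {h k : H} (h1 : M.Opp h k) : M.Opp k h := by
  rwa [Opp, Set.inter_comm]

lemma not_opp_self3 (h : H) : ¬ M.Opp h h := by
  intro e
  exact (M.plus_nonempty h).ne_empty (by rw [Opp, Set.inter_self] at e; exact e)

lemma not_opp_of_lt3 {h k : H} (hlt : M.Lt h k) : ¬ M.Opp h k := by
  intro e
  apply (M.plus_nonempty k).ne_empty
  rw [Opp, Set.inter_eq_self_of_subset_right hlt.subset] at e
  exact e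

lemma opp_of_opp_lt3 {h k j : H} (ho : M.Opp h j) (hlt : M.Lt h k) : M.Opp k j := by
  have : M.plus k ∩ M.plus j ⊆ ∅ := by
    rw [← ho]; exact Set.inter_subset_inter_left _ hlt.subset
  exact Set.subset_empty_iff.1 this

def depth (h : H) : ℕ := (M.lowerFinite h).toFinset.card

lemma depth_lt3 {h k : H} (hlt : M.Lt h k) : Stmt14.depth M h < Stmt14.depth M k := by
  classical
  have hins : insert h (M.lowerFinite h).toFinset ⊆ (M.lowerFinite k).toFinset := by
    intro x hx
    rcases Finset.mem_insert.mp hx with rfl | hx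
    · exact (M.lowerFinite k).mem_toFinset.2 hlt
    · exact (M.lowerFinite k).mem_toFinset.2 (hlt.trans ((M.lowerFinite h).mem_toFinset.1 hx))
  have hnm : h ∉ (M.lowerFinite h).toFinset := by
    simp only [Set.Finite.mem_toFinset, Set.mem_setOf_eq]
    exact ssubset_irrefl _
  have := Finset.card_le_card hins
  rw [Finset.card_insert_of_notMem hnm] at this
  exact Nat.lt_of_lt_of_le (Nat.lt_succ_self _) this

/-! ### elementary moves -/

def oppM (h k : H) (f : H → ℝ) : H → ℝ := fun x =>
  if x = h then f h - min (f h) (f k) else if x = k then f k - min (f h) (f k) else f x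

def trM (h k : H) (f : H → ℝ) : H → ℝ := fun x =>
  if x = h then min 1 (f h + f k) else if x = k then max 0 (f h + f k - 1) else f x

def Bdd01 (f : H → ℝ) : Prop := ∀ x, f x ∈ Set.Icc (0:ℝ) 1

def SuppIn (S : Finset H) (f : H → ℝ) : Prop := ∀ x, f x ≠ 0 → x ∈ S

lemma abs_add_abs_le {x y c d : ℝ} (h1 : x + y ≤ c + d) (h2 : x - y ≤ c + d)
    (h3 : -x + y ≤ c + d) (h4 : -x - y ≤ c + d) (hc : 0 ≤ c) (hd : 0 ≤ d) :
    |x| + |y| ≤ c + d := by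
  rcases abs_cases x with ⟨ex, _⟩ | ⟨ex, _⟩ <;> rcases abs_cases y with ⟨ey, _⟩ | ⟨ey, _⟩ <;>
    rw [ex, ey] <;> linarith

lemma abs2_opp (a b a' b' : ℝ) :
    |(a - min a b) - (a' - min a' b')| + |(b - min a b) - (b' - min a' b')| ≤
      |a - a'| + |b - b'| := by
  have ha := le_abs_self (a - a'); have ha' := neg_abs_le (a - a')
  have hb := le_abs_self (b - b'); have hb' := neg_abs_le (b - b')
  apply abs_add_abs_le <;> first
    | exact abs_nonneg _
    | (simp only [min_def]; split_ifs <;> linarith)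

lemma abs2_tr (a b a' b' : ℝ) :
    |min 1 (a + b) - min 1 (a' + b')| + |max 0 (a + b - 1) - max 0 (a' + b' - 1)| ≤
      |a - a'| + |b - b'| := by
  have ha := le_abs_self (a - a'); have ha' := neg_abs_le (a - a')
  have hb := le_abs_self (b - b'); have hb' := neg_abs_le (b - b')
  apply abs_add_abs_le <;> first
    | exact abs_nonneg _
    | (simp only [min_def, max_def]; split_ifs <;> linarith)

variable {M}

lemma oppM_bdd {f : H → ℝ} (hb : Bdd01 f) (h k : H) : Bdd01 (oppM h k f) := by
  intro x
  have h1 := hb h; have h2 := hb k; have h3 := hb x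
  simp only [Set.mem_Icc] at *
  simp only [oppM]
  split_ifs with e1 e2
  · rcases min_cases (f h) (f k) with ⟨e, le⟩ | ⟨e, le⟩ <;> rw [e] <;> constructor <;> linarith
  · rcases min_cases (f h) (f k) with ⟨e, le⟩ | ⟨e, le⟩ <;> rw [e] <;> constructor <;> linarith
  · exact h3

lemma trM_bdd {f : H → ℝ} (hb : Bdd01 f) (h k : H) : Bdd01 (trM h k f) := by
  intro x
  have h1 := hb h; have h2 := hb k; have h3 := hb x
  simp only [Set.mem_Icc] at *
  simp only [trM]
  split_ifs with e1 e2
  · exact ⟨le_min (by norm_num) (by linarith), min_le_left _ _⟩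
  · exact ⟨le_max_left _ _, max_le (by norm_num) (by linarith)⟩
  · exact h3

lemma oppM_le {f : H → ℝ} (hb : Bdd01 f) (h k x : H) : oppM h k f x ≤ f x := by
  have h1 := hb h; have h2 := hb k
  simp only [Set.mem_Icc] at *
  simp only [oppM]
  split_ifs with e1 e2
  · rcases min_cases (f h) (f k) with ⟨e, le⟩ | ⟨e, le⟩ <;> rw [e] <;> rw [e1] <;> linarith
  · rcases min_cases (f h) (f k) with ⟨e, le⟩ | ⟨e, le⟩ <;> rw [e] <;> rw [e2] <;> linarith
  · exact le_refl _

lemma oppM_eq_self {f : H → ℝ} (h0 : ∀ x, 0 ≤ f x) {h k : H} (hz : f h = 0 ∨ f k = 0) :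
    oppM h k f = f := by
  have hmin : min (f h) (f k) = 0 := by
    rcases hz with e | e
    · rw [e]; exact min_eq_left (h0 k)
    · rw [e]; exact min_eq_right (h0 h)
  funext x
  simp only [oppM, hmin, sub_zero]
  split_ifs with e1 e2
  · rw [e1]
  · rw [e2]
  · rfl

lemma trM_eq_self_of_zero {f : H → ℝ} (hb : Bdd01 f) {h k : H} (hz : f k = 0) :
    trM h k f = f := by
  funext x
  simp only [trM, hz, add_zero]
  split_ifs with e1 e2
  · rw [e1, min_eq_right (hb h).2]
  · rw [e2, hz]
    exact max_eq_left (by have := (hb h).2; linarith)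
  · rfl

lemma trM_eq_self_of_one {f : H → ℝ} (hb : Bdd01 f) {h k : H} (hz : f h = 1) :
    trM h k f = f := by
  funext x
  simp only [trM, hz]
  split_ifs with e1 e2
  · rw [e1, hz, min_eq_left (by have := (hb k).1; linarith)]
  · rw [e2]
    have e : (1:ℝ) + f k - 1 = f k := by ring
    rw [e, max_eq_right (hb k).1]
  · rfl

lemma oppM_other {f : H → ℝ} {h k x : H} (h1 : x ≠ h) (h2 : x ≠ k) : oppM h k f x = f x := by
  simp only [oppM, if_neg h1, if_neg h2]

lemma trM_other {f : H → ℝ} {h k x : H} (h1 : x ≠ h) (h2 : x ≠ k) : trM h k f x = f x := by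
  simp only [trM, if_neg h1, if_neg h2]

lemma trM_fst {f : H → ℝ} (h k : H) : trM h k f h = min 1 (f h + f k) := by
  simp only [trM]; rw [if_pos trivial]

lemma trM_snd {f : H → ℝ} {h k : H} (hne : h ≠ k) : trM h k f k = max 0 (f h + f k - 1) := by
  simp only [trM]; rw [if_neg (Ne.symm hne), if_pos trivial]

lemma trM_intervalic {f : H → ℝ} {h k : H} (hlt : M.Lt h k) (hb : Bdd01 f)
    (hi : M.Intervalic f) : M.Intervalic (trM h k f) := by
  have hne : h ≠ k := fun e => lt_irrefl3 M h (e ▸ hlt)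
  intro a b hab
  rcases hi a b hab with ha0 | hb0
  · by_cases e1 : a = h
    · by_cases e2 : b = k
      · rw [e1, e2] at hab
        exact absurd hab (not_opp_of_lt3 M hlt)
      · rw [e1] at hab ha0
        rcases hi k b (opp_of_opp_lt3 M hab hlt) with hk0 | hb0'
        · left; rw [e1, trM_fst, ha0, hk0]; norm_num
        · right
          have hbh : b ≠ h := by intro e; rw [e] at hab; exact not_opp_self3 M h hab
          rw [trM_other hbh e2]
          exact hb0'
    · by_cases e2 : a = k
      · left
        rw [e2] at ha0 ⊢
        rw [trM_snd hne, ha0, add_zero]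
        exact max_eq_left (by have := (hb h).2; linarith)
      · left; rw [trM_other e1 e2]; exact ha0
  · by_cases e1 : b = h
    · by_cases e2 : a = k
      · rw [e1, e2] at hab
        exact absurd (opp_symm3 M hab) (not_opp_of_lt3 M hlt)
      · rw [e1] at hab hb0
        rcases hi k a (opp_of_opp_lt3 M (opp_symm3 M hab) hlt) with hk0 | ha0'
        · right; rw [e1, trM_fst, hb0, hk0]; norm_num
        · left
          have hah : a ≠ h := by intro e; rw [e] at hab; exact not_opp_self3 M h hab
          rw [trM_other hah e2]
          exact ha0'
    · by_cases e2 : b = k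
      · right
        rw [e2] at hb0 ⊢
        rw [trM_snd hne, hb0, add_zero]
        exact max_eq_left (by have := (hb h).2; linarith)
      · right; rw [trM_other e1 e2]; exact hb0

/-! ### runs of moves -/

def run (mv : H → H → (H → ℝ) → (H → ℝ)) : List (H × H) → (H → ℝ) → (H → ℝ)
  | [], f => f
  | q :: l, f => run mv l (mv q.1 q.2 f)

lemma run_inv {mv : H → H → (H → ℝ) → (H → ℝ)} (P : (H → ℝ) → Prop) :
    ∀ (l : List (H × H)) (f : H → ℝ), (∀ q ∈ l, ∀ g, P g → P (mv q.1 q.2 g)) → P f →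
      P (run mv l f)
  | [], f, _, hf => hf
  | q :: l, f, hl, hf =>
    run_inv P l (mv q.1 q.2 f) (fun r hr => hl r (List.mem_cons_of_mem _ hr))
      (hl q (List.mem_cons_self) f hf)

lemma run_id {mv : H → H → (H → ℝ) → (H → ℝ)} :
    ∀ (l : List (H × H)) (f : H → ℝ), (∀ q ∈ l, mv q.1 q.2 f = f) → run mv l f = f
  | [], _, _ => rfl
  | q :: l, f, hl => by
    have e : mv q.1 q.2 f = f := hl q (List.mem_cons_self)
    show run mv l (mv q.1 q.2 f) = f
    rw [e]
    exact run_id l f (fun r hr => hl r (List.mem_cons_of_mem _ hr))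

lemma run_filter {mv : H → H → (H → ℝ) → (H → ℝ)} (p : H × H → Bool)
    (Inv : (H → ℝ) → Prop) :
    ∀ (l : List (H × H)) (f : H → ℝ),
      (∀ q ∈ l, ∀ g, Inv g → Inv (mv q.1 q.2 g)) →
      (∀ q ∈ l, p q = false → ∀ g, Inv g → mv q.1 q.2 g = g) →
      Inv f → run mv (l.filter p) f = run mv l f
  | [], f, _, _, _ => rfl
  | q :: l, f, hpres, hid, hf => by
    by_cases hp : p q
    · rw [List.filter_cons_of_pos hp]
      show run mv (l.filter p) (mv q.1 q.2 f) = run mv l (mv q.1 q.2 f)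
      exact run_filter p Inv l _ (fun r hr => hpres r (List.mem_cons_of_mem _ hr))
        (fun r hr => hid r (List.mem_cons_of_mem _ hr))
        (hpres q (List.mem_cons_self) f hf)
    · rw [List.filter_cons_of_neg hp]
      show run mv (l.filter p) f = run mv l (mv q.1 q.2 f)
      rw [hid q (List.mem_cons_self) (by simpa using hp) f hf]
      exact run_filter p Inv l f (fun r hr => hpres r (List.mem_cons_of_mem _ hr))
        (fun r hr => hid r (List.mem_cons_of_mem _ hr)) hf

lemma run_le {mv : H → H → (H → ℝ) → (H → ℝ)} (E : Finset H) (D : (H → ℝ) → (H → ℝ) → ℝ) :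
    ∀ (l : List (H × H)) (f g : H → ℝ),
      (∀ q ∈ l, ∀ f' g', D (mv q.1 q.2 f') (mv q.1 q.2 g') ≤ D f' g') →
      D (run mv l f) (run mv l g) ≤ D f g
  | [], f, g, _ => le_refl _
  | q :: l, f, g, hl => by
    calc D (run mv l (mv q.1 q.2 f)) (run mv l (mv q.1 q.2 g)) ≤ D (mv q.1 q.2 f) (mv q.1 q.2 g) :=
          run_le E D l _ _ (fun r hr => hl r (List.mem_cons_of_mem _ hr))
      _ ≤ D f g := hl q (List.mem_cons_self) f g

lemma run_sum (E : Finset H) {mv : H → H → (H → ℝ) → (H → ℝ)} :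
    ∀ (l : List (H × H)) (f : H → ℝ),
      (∀ q ∈ l, ∀ g : H → ℝ, ∑ x ∈ E, mv q.1 q.2 g x = ∑ x ∈ E, g x) →
      ∑ x ∈ E, run mv l f x = ∑ x ∈ E, f x
  | [], _, _ => rfl
  | q :: l, f, hl => by
    show ∑ x ∈ E, run mv l (mv q.1 q.2 f) x = _
    rw [run_sum E l _ (fun r hr => hl r (List.mem_cons_of_mem _ hr))]
    exact hl q (List.mem_cons_self) f

/-! ### sums over pairs -/

lemma sum_split (E : Finset H) {h k : H} (hh : h ∈ E) (hk : k ∈ E) (hne : h ≠ k) (φ : H → ℝ) :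
    ∑ x ∈ E, φ x = φ h + φ k + ∑ x ∈ (E.erase h).erase k, φ x := by
  classical
  have hkE : k ∈ E.erase h := Finset.mem_erase.2 ⟨Ne.symm hne, hk⟩
  rw [← Finset.add_sum_erase _ φ hh, ← Finset.add_sum_erase _ φ hkE]
  ring

lemma pair_lip {F G f g : H → ℝ} (E : Finset H) {h k : H} (hh : h ∈ E) (hk : k ∈ E)
    (hne : h ≠ k)
    (hpair : |F h - G h| + |F k - G k| ≤ |f h - g h| + |f k - g k|)
    (hoth : ∀ x, x ≠ h → x ≠ k → F x = f x ∧ G x = g x) :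
    ∑ x ∈ E, |F x - G x| ≤ ∑ x ∈ E, |f x - g x| := by
  rw [sum_split E hh hk hne (fun x => |F x - G x|),
    sum_split E hh hk hne (fun x => |f x - g x|)]
  have he : ∑ x ∈ (E.erase h).erase k, |F x - G x| = ∑ x ∈ (E.erase h).erase k, |f x - g x| := by
    apply Finset.sum_congr rfl
    intro x hx
    have hxk : x ≠ k := (Finset.mem_erase.1 hx).1
    have hxh : x ≠ h := (Finset.mem_erase.1 (Finset.mem_erase.1 hx).2).1
    rw [(hoth x hxh hxk).1, (hoth x hxh hxk).2]
  rw [he]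
  linarith

lemma oppM_lip (E : Finset H) {h k : H} (hh : h ∈ E) (hk : k ∈ E) (hne : h ≠ k)
    (f g : H → ℝ) :
    ∑ x ∈ E, |oppM h k f x - oppM h k g x| ≤ ∑ x ∈ E, |f x - g x| := by
  apply pair_lip E hh hk hne
  · have e1 : oppM h k f h = f h - min (f h) (f k) := by simp only [oppM]; rw [if_pos trivial]
    have e2 : oppM h k f k = f k - min (f h) (f k) := by
      simp only [oppM]; rw [if_neg (Ne.symm hne), if_pos trivial]
    have e3 : oppM h k g h = g h - min (g h) (g k) := by simp only [oppM]; rw [if_pos trivial]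
    have e4 : oppM h k g k = g k - min (g h) (g k) := by
      simp only [oppM]; rw [if_neg (Ne.symm hne), if_pos trivial]
    rw [e1, e2, e3, e4]
    exact abs2_opp _ _ _ _
  · intro x hxh hxk
    exact ⟨oppM_other hxh hxk, oppM_other hxh hxk⟩

lemma trM_lip (E : Finset H) {h k : H} (hh : h ∈ E) (hk : k ∈ E) (hne : h ≠ k)
    (f g : H → ℝ) :
    ∑ x ∈ E, |trM h k f x - trM h k g x| ≤ ∑ x ∈ E, |f x - g x| := by
  apply pair_lip E hh hk hne
  · rw [trM_fst, trM_fst, trM_snd hne, trM_snd hne]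
    exact abs2_tr _ _ _ _
  · intro x hxh hxk
    exact ⟨trM_other hxh hxk, trM_other hxh hxk⟩

lemma trM_sum (E : Finset H) {h k : H} (hh : h ∈ E) (hk : k ∈ E) (hne : h ≠ k) (f : H → ℝ) :
    ∑ x ∈ E, trM h k f x = ∑ x ∈ E, f x := by
  rw [sum_split E hh hk hne (fun x => trM h k f x), sum_split E hh hk hne f]
  have he : ∑ x ∈ (E.erase h).erase k, trM h k f x = ∑ x ∈ (E.erase h).erase k, f x := by
    apply Finset.sum_congr rfl
    intro x hx
    have hxk : x ≠ k := (Finset.mem_erase.1 hx).1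
    have hxh : x ≠ h := (Finset.mem_erase.1 (Finset.mem_erase.1 hx).2).1
    exact trM_other hxh hxk
  rw [he, trM_fst, trM_snd hne]
  rcases le_total (f h + f k) 1 with hc | hc
  · rw [min_eq_right hc, max_eq_left (by linarith)]
    ring
  · rw [min_eq_left hc, max_eq_right (by linarith)]
    ring

/-! ### schedules -/

variable (M)

def kfun [LinearOrder H] : H × H → ℕ ×ₗ (H ×ₗ H) :=
  fun p => toLex (Stmt14.depth M p.1, toLex p)

lemma kfun_inj [LinearOrder H] : Function.Injective (kfun M) := by
  intro p q e
  exact congrArg (fun x => ofLex (ofLex x).2) e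

def prel [LinearOrder H] : H × H → H × H → Prop := fun p q => kfun M p ≤ kfun M q

def prelt [LinearOrder H] : H × H → H × H → Prop := fun p q => kfun M p < kfun M q

section SortSec

variable [LinearOrder H]

instance : IsTrans (H × H) (prel M) := ⟨fun _ _ _ hab hbc => le_trans hab hbc⟩

instance : IsAntisymm (H × H) (prel M) :=
  ⟨fun _ _ hab hba => kfun_inj M (le_antisymm hab hba)⟩

instance : IsTotal (H × H) (prel M) := ⟨fun a b => le_total _ _⟩

noncomputable instance : DecidableRel (prel M) := fun p q =>
  (inferInstance : Decidable (kfun M p ≤ kfun M q))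

def sortPairs (A : Finset (H × H)) : List (H × H) := A.sort (prel M)

lemma mem_sortPairs {A : Finset (H × H)} {p : H × H} :
    p ∈ sortPairs M A ↔ p ∈ A := Finset.mem_sort _

lemma sortPairs_sorted (A : Finset (H × H)) :
    List.Pairwise (prelt M) (sortPairs M A) := by
  have h1 : List.Pairwise (prel M) (sortPairs M A) := Finset.pairwise_sort _ _
  have h2 : (sortPairs M A).Nodup := Finset.sort_nodup _ _
  have h3 := List.Pairwise.and h1 h2
  apply h3.imp
  rintro a b ⟨hle, hne⟩
  exact lt_of_le_of_ne hle fun e => hne (kfun_inj M e)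

lemma sortPairs_filter {A B : Finset (H × H)} (hAB : A ⊆ B)
    (p : H × H → Bool) (hmem : ∀ q ∈ B, q ∈ A ↔ p q = true) :
    (sortPairs M B).filter p = sortPairs M A := by
  classical
  refine (fun hp h1 h2 => List.Perm.eq_of_pairwise' (r := prel M) h1 h2 hp) ?_ ?_ ?_
  · apply List.perm_of_nodup_nodup_toFinset_eq
    · exact (Finset.sort_nodup _ _).filter _
    · exact Finset.sort_nodup _ _
    · ext q
      simp only [List.mem_toFinset, List.mem_filter, sortPairs, Finset.mem_sort]
      constructor
      · rintro ⟨hqB, hq⟩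
        exact (hmem q hqB).2 hq
      · intro hqA
        exact ⟨hAB hqA, (hmem q (hAB hqA)).1 hqA⟩
  · exact (Finset.pairwise_sort _ _).filter _
  · exact Finset.pairwise_sort _ _

def P1 (S : Finset H) : Finset (H × H) :=
  letI : DecidablePred fun q : H × H => M.Opp q.1 q.2 := fun q => Classical.propDecidable _
  (S ×ˢ S).filter fun q => M.Opp q.1 q.2

def P2 (S : Finset H) : Finset (H × H) :=
  letI : DecidablePred fun q : H × H => M.Lt q.1 q.2 := fun q => Classical.propDecidable _
  (S ×ˢ S).filter fun q => M.Lt q.1 q.2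

def L1 (S : Finset H) : List (H × H) := sortPairs M (P1 M S)

def L2 (S : Finset H) : List (H × H) := sortPairs M (P2 M S)

lemma mem_L1 {S : Finset H} {p : H × H} :
    p ∈ L1 M S ↔ (p.1 ∈ S ∧ p.2 ∈ S) ∧ M.Opp p.1 p.2 := by
  rw [L1, mem_sortPairs, P1]
  rw [Finset.mem_filter, Finset.mem_product]

lemma mem_L2 {S : Finset H} {p : H × H} :
    p ∈ L2 M S ↔ (p.1 ∈ S ∧ p.2 ∈ S) ∧ M.Lt p.1 p.2 := by
  rw [L2, mem_sortPairs, P2]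
  rw [Finset.mem_filter, Finset.mem_product]

lemma lt_dep_le {p q : H × H} (hpq : prelt M p q) :
    Stmt14.depth M p.1 ≤ Stmt14.depth M q.1 := by
  rcases Prod.Lex.lt_iff.1 hpq with hd | ⟨hd, _⟩
  · exact le_of_lt hd
  · exact le_of_eq hd

end SortSec

/-! ### upward closure -/

def upClose (F : Finset H) : Finset H :=
  letI : DecidableEq H := Classical.decEq H
  F ∪ F.biUnion fun h => (M.lowerFinite h).toFinset

lemma subset_upClose (F : Finset H) : F ⊆ upClose M F := by
  classical
  intro x hx
  exact Finset.mem_union.2 (Or.inl hx)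

lemma upClose_closed {F : Finset H} {h k : H} (hlt : M.Lt h k) (hk : k ∈ upClose M F) :
    h ∈ upClose M F := by
  classical
  rcases Finset.mem_union.1 hk with hk | hk
  · refine Finset.mem_union.2 (Or.inr ?_)
    refine Finset.mem_biUnion.2 ⟨k, hk, ?_⟩
    exact (M.lowerFinite k).mem_toFinset.2 hlt
  · rcases Finset.mem_biUnion.1 hk with ⟨j, hj, hkj⟩
    refine Finset.mem_union.2 (Or.inr (Finset.mem_biUnion.2 ⟨j, hj, ?_⟩))
    have hjk : M.plus j ⊂ M.plus k := (M.lowerFinite j).mem_toFinset.1 hkj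
    exact (M.lowerFinite j).mem_toFinset.2 (hjk.trans hlt)

/-! ### phase invariants -/

variable {M}

lemma oppM_fst {f : H → ℝ} (h k : H) : oppM h k f h = f h - min (f h) (f k) := by
  simp only [oppM]; rw [if_pos trivial]

lemma oppM_snd {f : H → ℝ} {h k : H} (hne : h ≠ k) :
    oppM h k f k = f k - min (f h) (f k) := by
  simp only [oppM]; rw [if_neg (Ne.symm hne), if_pos trivial]

lemma oppM_zero {f : H → ℝ} (hb : Bdd01 f) {h k x : H} (hz : f x = 0) :
    oppM h k f x = 0 := by
  have h1 := (oppM_bdd hb h k x).1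
  have h2 := oppM_le hb h k x
  rw [hz] at h2
  linarith

lemma phase1 [LinearOrder H] (S : Finset H) :
    ∀ (B A : List (H × H)) (f : H → ℝ),
      L1 M S = A ++ B → Bdd01 f → SuppIn S f →
      (∀ p ∈ A, f p.1 = 0 ∨ f p.2 = 0) →
      Bdd01 (run oppM B f) ∧ SuppIn S (run oppM B f) ∧
        (∀ p ∈ L1 M S, run oppM B f p.1 = 0 ∨ run oppM B f p.2 = 0)
  | [], A, f, hL, hb, hs, hA => by
    rw [List.append_nil] at hL
    exact ⟨hb, hs, by rw [hL]; exact hA⟩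
  | q :: B', A, f, hL, hb, hs, hA => by
    have hqL : q ∈ L1 M S := by
      rw [hL]; exact List.mem_append.2 (Or.inr (List.mem_cons_self))
    have hne : q.1 ≠ q.2 := by
      intro e
      exact not_opp_self3 M q.2 (e ▸ ((mem_L1 M).1 hqL).2)
    have hb' : Bdd01 (oppM q.1 q.2 f) := oppM_bdd hb q.1 q.2
    have hz' : ∀ x, f x = 0 → oppM q.1 q.2 f x = 0 := fun x hx => oppM_zero hb hx
    have hs' : SuppIn S (oppM q.1 q.2 f) := by
      intro x hx
      by_contra hxS
      have : f x = 0 := by_contra fun hfx => hxS (hs x hfx)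
      exact hx (hz' x this)
    have hA' : ∀ p ∈ A ++ [q], oppM q.1 q.2 f p.1 = 0 ∨ oppM q.1 q.2 f p.2 = 0 := by
      intro p hp
      rcases List.mem_append.1 hp with hpA | hpq
      · rcases hA p hpA with h0 | h0
        · exact Or.inl (hz' _ h0)
        · exact Or.inr (hz' _ h0)
      · have : p = q := by simpa using hpq
        subst this
        rcases min_cases (f p.1) (f p.2) with ⟨e, _⟩ | ⟨e, _⟩
        · left; rw [oppM_fst, e, sub_self]
        · right; rw [oppM_snd hne, e, sub_self]
    have hL' : L1 M S = (A ++ [q]) ++ B' := by rw [hL, List.append_assoc]; rfl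
    exact phase1 S B' (A ++ [q]) (oppM q.1 q.2 f) hL' hb' hs' hA'

lemma phase2 [LinearOrder H] (S : Finset H) (hup : ∀ h k, M.Lt h k → k ∈ S → h ∈ S) :
    ∀ (B A : List (H × H)) (f : H → ℝ),
      L2 M S = A ++ B → Bdd01 f → M.Intervalic f → SuppIn S f →
      (∀ p ∈ A, f p.1 = 1 ∨ f p.2 = 0) →
      Bdd01 (run trM B f) ∧ M.Intervalic (run trM B f) ∧ SuppIn S (run trM B f) ∧
        (∀ p ∈ L2 M S, run trM B f p.1 = 1 ∨ run trM B f p.2 = 0)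
  | [], A, f, hL, hb, hi, hs, hA => by
    rw [List.append_nil] at hL
    exact ⟨hb, hi, hs, by rw [hL]; exact hA⟩
  | q :: B', A, f, hL, hb, hi, hs, hA => by
    have hqL : q ∈ L2 M S := by
      rw [hL]; exact List.mem_append.2 (Or.inr (List.mem_cons_self))
    obtain ⟨⟨hq1S, hq2S⟩, hqlt⟩ := (mem_L2 M).1 hqL
    have hne : q.1 ≠ q.2 := fun e => lt_irrefl3 M q.1 (by rw [show q.2 = q.1 from e.symm] at hqlt; exact hqlt)
    have hdq : Stmt14.depth M q.1 < Stmt14.depth M q.2 := depth_lt3 M hqlt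
    -- sortedness facts
    have hsort : List.Pairwise (prelt M) (A ++ q :: B') := by rw [← hL]; exact sortPairs_sorted M _
    have hpw := List.pairwise_append.1 hsort
    have hAq : ∀ p ∈ A, prelt M p q := fun p hp =>
      hpw.2.2 p hp q (List.mem_cons_self)
    have hqB : ∀ r ∈ B', prelt M q r := fun r hr =>
      (List.pairwise_cons.1 hpw.2.1).1 r hr
    have memA : ∀ r ∈ L2 M S, Stmt14.depth M r.1 < Stmt14.depth M q.1 → r ∈ A := by
      intro r hr hdr
      rw [hL] at hr
      rcases List.mem_append.1 hr with h | h
      · exact h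
      · rcases List.mem_cons.1 h with h | h
        · rw [h] at hdr; exact absurd hdr (lt_irrefl _)
        · exact absurd (lt_dep_le M (hqB r h)) (by omega)
    -- invariant preservation
    have hb' : Bdd01 (trM q.1 q.2 f) := trM_bdd hb q.1 q.2
    have hi' : M.Intervalic (trM q.1 q.2 f) := trM_intervalic hqlt hb hi
    have hs' : SuppIn S (trM q.1 q.2 f) := by
      intro x hx
      by_cases e1 : x = q.1
      · rw [e1]; exact hq1S
      · by_cases e2 : x = q.2
        · rw [e2]; exact hq2S
        · rw [trM_other e1 e2] at hx; exact hs x hx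
    have hA' : ∀ p ∈ A ++ [q], trM q.1 q.2 f p.1 = 1 ∨ trM q.1 q.2 f p.2 = 0 := by
      intro p hp
      rcases List.mem_append.1 hp with hpA | hpq
      · -- old pair
        have hpL : p ∈ L2 M S := by rw [hL]; exact List.mem_append.2 (Or.inl hpA)
        obtain ⟨⟨hp1S, hp2S⟩, hplt⟩ := (mem_L2 M).1 hpL
        have hdp : Stmt14.depth M p.1 ≤ Stmt14.depth M q.1 := lt_dep_le M (hAq p hpA)
        have hne12 : p.1 ≠ q.2 := by
          intro e
          rw [e] at hdp; omega
        rcases hA p hpA with h1 | h0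
        · left
          by_cases e1 : p.1 = q.1
          · rw [e1, trM_fst]
            rw [e1] at h1
            rw [h1]
            exact min_eq_left (by have := (hb q.2).1; linarith)
          · rw [trM_other e1 hne12]; exact h1
        · by_cases e2 : p.2 = q.1
          · -- mass could enter p.2 = q.1; use the pair (p.1, q.2)
            have hlt1 : M.Lt p.1 q.1 := by rw [← e2]; exact hplt
            have hltk : M.Lt p.1 q.2 := lt_trans3 M hlt1 hqlt
            have hmem2 : (p.1, q.2) ∈ L2 M S := (mem_L2 M).2 ⟨⟨hp1S, hq2S⟩, hltk⟩
            have hdlt : Stmt14.depth M p.1 < Stmt14.depth M q.1 := depth_lt3 M hlt1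
            have hA2 : (p.1, q.2) ∈ A := memA _ hmem2 hdlt
            rcases hA _ hA2 with hg1 | hk0
            · left
              have e1 : p.1 ≠ q.1 := fun e => by rw [e] at hdlt; exact absurd hdlt (lt_irrefl _)
              rw [trM_other e1 hne12]
              exact hg1
            · right
              rw [e2] at h0
              rw [e2, trM_fst, h0, hk0]
              norm_num
          · by_cases e3 : p.2 = q.2
            · right
              rw [e3, trM_snd hne]
              rw [e3] at h0
              rw [h0, add_zero]
              exact max_eq_left (by have := (hb q.1).2; linarith)
            · right
              rw [trM_other e2 e3]
              exact h0
      · -- the new pair q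
        have : p = q := by simpa using hpq
        subst this
        rcases le_total (f p.1 + f p.2) 1 with hc | hc
        · right
          rw [trM_snd hne]
          exact max_eq_left (by linarith)
        · left
          rw [trM_fst]
          exact min_eq_left hc
    have hL' : L2 M S = (A ++ [q]) ++ B' := by rw [hL, List.append_assoc]; rfl
    exact phase2 S hup B' (A ++ [q]) (trM q.1 q.2 f) hL' hb' hi' hs' hA'

/-! ### the projection -/

variable (M)

lemma suppZero {S : Finset H} {g : H → ℝ} (hs : SuppIn S g) {x : H} (hx : x ∉ S) : g x = 0 :=
  by_contra fun h => hx (hs x h)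

lemma oppM_suppIn {S : Finset H} {g : H → ℝ} (hb : Bdd01 g) (hs : SuppIn S g) (h k : H) :
    SuppIn S (oppM h k g) := by
  intro x hx
  apply hs x
  intro e
  exact hx (oppM_zero hb e)

lemma projS [LinearOrder H] (S : Finset H) (hup : ∀ h k, M.Lt h k → k ∈ S → h ∈ S)
    (ξ : H → ℝ) (hb : Bdd01 ξ) (hs : SuppIn S ξ) :
    Bdd01 (run trM (L2 M S) (run oppM (L1 M S) ξ)) ∧
      SuppIn S (run trM (L2 M S) (run oppM (L1 M S) ξ)) ∧
      M.Intervalic (run trM (L2 M S) (run oppM (L1 M S) ξ)) ∧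
      M.Actual (run trM (L2 M S) (run oppM (L1 M S) ξ)) := by
  obtain ⟨hb1, hs1, hz1⟩ :=
    phase1 (M := M) S (L1 M S) [] ξ (by rw [List.nil_append]) hb hs (by simp)
  have hi1 : M.Intervalic (run oppM (L1 M S) ξ) := by
    intro h k hopp
    by_cases h1 : h ∈ S
    · by_cases h2 : k ∈ S
      · exact hz1 (h, k) ((mem_L1 M).2 ⟨⟨h1, h2⟩, hopp⟩)
      · exact Or.inr (suppZero hs1 h2)
    · exact Or.inl (suppZero hs1 h1)
  obtain ⟨hb2, hi2, hs2, hz2⟩ :=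
    phase2 (M := M) S hup (L2 M S) [] _ (by rw [List.nil_append]) hb1 hi1 hs1 (by simp)
  refine ⟨hb2, hs2, hi2, ?_⟩
  intro h k hlt
  by_cases h2 : k ∈ S
  · exact hz2 (h, k) ((mem_L2 M).2 ⟨⟨hup h k hlt h2, h2⟩, hlt⟩)
  · exact Or.inr (suppZero hs2 h2)

lemma mem_P1 {S : Finset H} {q : H × H} :
    q ∈ P1 M S ↔ (q.1 ∈ S ∧ q.2 ∈ S) ∧ M.Opp q.1 q.2 := by
  rw [P1]
  rw [Finset.mem_filter, Finset.mem_product]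

lemma mem_P2 {S : Finset H} {q : H × H} :
    q ∈ P2 M S ↔ (q.1 ∈ S ∧ q.2 ∈ S) ∧ M.Lt q.1 q.2 := by
  rw [P2]
  rw [Finset.mem_filter, Finset.mem_product]

lemma coh [LinearOrder H] {S T : Finset H} (hST : S ⊆ T)
    (hupS : ∀ h k, M.Lt h k → k ∈ S → h ∈ S)
    (ξ : H → ℝ) (hb : Bdd01 ξ) (hs : SuppIn S ξ) :
    run trM (L2 M T) (run oppM (L1 M T) ξ) = run trM (L2 M S) (run oppM (L1 M S) ξ) := by
  classical
  set p : H × H → Bool := fun q => decide (q.1 ∈ S ∧ q.2 ∈ S) with hp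
  have hpdec : ∀ q : H × H, p q = true ↔ (q.1 ∈ S ∧ q.2 ∈ S) := by
    intro q; rw [hp]; exact decide_eq_true_iff
  set Inv : (H → ℝ) → Prop := fun g => Bdd01 g ∧ SuppIn S g with hInv
  have e1 : (L1 M T).filter p = L1 M S := by
    apply sortPairs_filter M (A := P1 M S) (B := P1 M T)
    · intro q hq
      obtain ⟨⟨h1, h2⟩, h3⟩ := (mem_P1 M).1 hq
      exact (mem_P1 M).2 ⟨⟨hST h1, hST h2⟩, h3⟩
    · intro q hq
      rw [hpdec q, mem_P1 M]
      obtain ⟨-, h3⟩ := (mem_P1 M).1 hq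
      exact ⟨fun h => h.1, fun h => ⟨h, h3⟩⟩
  have e2 : (L2 M T).filter p = L2 M S := by
    apply sortPairs_filter M (A := P2 M S) (B := P2 M T)
    · intro q hq
      obtain ⟨⟨h1, h2⟩, h3⟩ := (mem_P2 M).1 hq
      exact (mem_P2 M).2 ⟨⟨hST h1, hST h2⟩, h3⟩
    · intro q hq
      rw [hpdec q, mem_P2 M]
      obtain ⟨-, h3⟩ := (mem_P2 M).1 hq
      exact ⟨fun h => h.1, fun h => ⟨h, h3⟩⟩
  have hpres1 : ∀ q ∈ L1 M T, ∀ g, Inv g → Inv (oppM q.1 q.2 g) := by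
    intro q _ g ⟨hbg, hsg⟩
    exact ⟨oppM_bdd hbg _ _, oppM_suppIn hbg hsg _ _⟩
  have hid1 : ∀ q ∈ L1 M T, p q = false → ∀ g, Inv g → oppM q.1 q.2 g = g := by
    intro q _ hq g ⟨hbg, hsg⟩
    apply oppM_eq_self (fun x => (hbg x).1)
    have : ¬(q.1 ∈ S ∧ q.2 ∈ S) := by
      intro h
      rw [← hpdec q] at h
      rw [hq] at h
      exact Bool.false_ne_true h
    rcases not_and_or.1 this with h | h
    · exact Or.inl (suppZero hsg h)
    · exact Or.inr (suppZero hsg h)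
  have hpres2 : ∀ q ∈ L2 M T, ∀ g, Inv g → Inv (trM q.1 q.2 g) := by
    intro q hq g ⟨hbg, hsg⟩
    refine ⟨trM_bdd hbg _ _, ?_⟩
    by_cases hz : g q.2 = 0
    · rw [trM_eq_self_of_zero hbg hz]; exact hsg
    · have h2S : q.2 ∈ S := hsg _ hz
      have h1S : q.1 ∈ S := hupS _ _ ((mem_L2 M).1 hq).2 h2S
      intro x hx
      by_cases x1 : x = q.1
      · rw [x1]; exact h1S
      · by_cases x2 : x = q.2
        · rw [x2]; exact h2S
        · rw [trM_other x1 x2] at hx; exact hsg x hx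
  have hid2 : ∀ q ∈ L2 M T, p q = false → ∀ g, Inv g → trM q.1 q.2 g = g := by
    intro q hq hpq g ⟨hbg, hsg⟩
    apply trM_eq_self_of_zero hbg
    apply suppZero hsg
    intro h2S
    have h1S : q.1 ∈ S := hupS _ _ ((mem_L2 M).1 hq).2 h2S
    have : p q = true := (hpdec q).2 ⟨h1S, h2S⟩
    rw [hpq] at this
    simp at this
  have r1 : run oppM ((L1 M T).filter p) ξ = run oppM (L1 M T) ξ :=
    run_filter p Inv (L1 M T) ξ hpres1 hid1 ⟨hb, hs⟩
  rw [e1] at r1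
  have hinv1 : Inv (run oppM (L1 M T) ξ) :=
    run_inv Inv (L1 M T) ξ hpres1 ⟨hb, hs⟩
  have r2 : run trM ((L2 M T).filter p) (run oppM (L1 M T) ξ) =
      run trM (L2 M T) (run oppM (L1 M T) ξ) :=
    run_filter p Inv (L2 M T) _ hpres2 hid2 hinv1
  rw [e2] at r2
  rw [← r2, r1]

def S0 (ξ : H → ℝ) (hξ : CubeSystem.memC ξ) : Finset H := upClose M hξ.2.toFinset

lemma suppIn_S0 (ξ : H → ℝ) (hξ : CubeSystem.memC ξ) : SuppIn (S0 M ξ hξ) ξ := by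
  intro x hx
  exact subset_upClose M _ (hξ.2.mem_toFinset.2 hx)

lemma up_S0 (ξ : H → ℝ) (hξ : CubeSystem.memC ξ) :
    ∀ h k, M.Lt h k → k ∈ S0 M ξ hξ → h ∈ S0 M ξ hξ := fun _ _ hlt hk =>
  upClose_closed M hlt hk

def PP [LinearOrder H] (ξ : H → ℝ) : H → ℝ :=
  if hξ : CubeSystem.memC ξ then
    run trM (L2 M (S0 M ξ hξ)) (run oppM (L1 M (S0 M ξ hξ)) ξ) else ξ

lemma PP_eq [LinearOrder H] (ξ : H → ℝ) (hξ : CubeSystem.memC ξ) :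
    PP M ξ = run trM (L2 M (S0 M ξ hξ)) (run oppM (L1 M (S0 M ξ hξ)) ξ) := by
  rw [PP, dif_pos hξ]

lemma PP_props [LinearOrder H] (ξ : H → ℝ) (hξ : CubeSystem.memC ξ) :
    Bdd01 (PP M ξ) ∧ SuppIn (S0 M ξ hξ) (PP M ξ) ∧ M.Intervalic (PP M ξ) ∧
      M.Actual (PP M ξ) := by
  rw [PP_eq M ξ hξ]
  exact projS M _ (up_S0 M ξ hξ) ξ hξ.1 (suppIn_S0 M ξ hξ)

end Stmt14
end


/-- The Projection Theorem: there is a retraction `P` of the cube `C` onto the set `A` of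
intervalic actual points (the embedded image of `X`) which is 1-Lipschitz for the `l¹`-metric,
restricts to the identity on `A`, and preserves the `l¹`-norm on intervalic points. -/
theorem stmt14 {V H : Type*} (M : CubeSystem V H) :
    ∃ P : (H → ℝ) → (H → ℝ),
      (∀ ξ, CubeSystem.memC ξ → (CubeSystem.memC (P ξ) ∧ M.Intervalic (P ξ) ∧ M.Actual (P ξ))) ∧
      (∀ ξ η, CubeSystem.memC ξ → CubeSystem.memC η →
        ∑' h : H, |P ξ h - P η h| ≤ ∑' h : H, |ξ h - η h|) ∧
      (∀ ξ, CubeSystem.memC ξ → M.Intervalic ξ → M.Actual ξ → P ξ = ξ) ∧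
      (∀ ξ, CubeSystem.memC ξ → M.Intervalic ξ → ∑' h : H, |P ξ h| = ∑' h : H, |ξ h|) := by
  classical
  letI : LinearOrder H := IsWellOrder.linearOrder WellOrderingRel
  refine ⟨Stmt14.PP M, ?_, ?_, ?_, ?_⟩
  · -- maps C into A
    intro ξ hξ
    obtain ⟨hb, hs, hi, ha⟩ := Stmt14.PP_props M ξ hξ
    refine ⟨⟨hb, ?_⟩, hi, ha⟩
    exact Set.Finite.subset (Stmt14.S0 M ξ hξ).finite_toSet fun x hx => hs x hx
  · -- 1-Lipschitz
    intro ξ η hξ hη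
    set Sξ := Stmt14.S0 M ξ hξ with hSξ
    set Sη := Stmt14.S0 M η hη with hSη
    set E := Sξ ∪ Sη with hE
    have hupE : ∀ h k, M.Lt h k → k ∈ E → h ∈ E := by
      intro h k hlt hk
      rcases Finset.mem_union.1 hk with hk | hk
      · exact Finset.mem_union.2 (Or.inl (Stmt14.upClose_closed M hlt hk))
      · exact Finset.mem_union.2 (Or.inr (Stmt14.upClose_closed M hlt hk))
    have hPξ : Stmt14.PP M ξ = Stmt14.run Stmt14.trM (Stmt14.L2 M E) (Stmt14.run Stmt14.oppM (Stmt14.L1 M E) ξ) := by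
      rw [Stmt14.PP_eq M ξ hξ]
      exact (Stmt14.coh M Finset.subset_union_left (Stmt14.up_S0 M ξ hξ) ξ hξ.1
        (Stmt14.suppIn_S0 M ξ hξ)).symm
    have hPη : Stmt14.PP M η = Stmt14.run Stmt14.trM (Stmt14.L2 M E) (Stmt14.run Stmt14.oppM (Stmt14.L1 M E) η) := by
      rw [Stmt14.PP_eq M η hη]
      exact (Stmt14.coh M Finset.subset_union_right (Stmt14.up_S0 M η hη) η hη.1
        (Stmt14.suppIn_S0 M η hη)).symm
    -- finite-sum comparison
    have hlip2 : ∀ q ∈ Stmt14.L2 M E, ∀ f' g' : H → ℝ,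
        ∑ x ∈ E, |Stmt14.trM q.1 q.2 f' x - Stmt14.trM q.1 q.2 g' x| ≤ ∑ x ∈ E, |f' x - g' x| := by
      intro q hq f' g'
      obtain ⟨⟨h1, h2⟩, hlt⟩ := (Stmt14.mem_L2 M).1 hq
      have hne : q.1 ≠ q.2 := fun e =>
        Stmt14.lt_irrefl3 M q.1 (by rw [show q.2 = q.1 from e.symm] at hlt; exact hlt)
      exact Stmt14.trM_lip E h1 h2 hne f' g'
    have hlip1 : ∀ q ∈ Stmt14.L1 M E, ∀ f' g' : H → ℝ,
        ∑ x ∈ E, |Stmt14.oppM q.1 q.2 f' x - Stmt14.oppM q.1 q.2 g' x| ≤ ∑ x ∈ E, |f' x - g' x| := by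
      intro q hq f' g'
      obtain ⟨⟨h1, h2⟩, hopp⟩ := (Stmt14.mem_L1 M).1 hq
      have hne : q.1 ≠ q.2 := fun e => Stmt14.not_opp_self3 M q.2 (e ▸ hopp)
      exact Stmt14.oppM_lip E h1 h2 hne f' g'
    have key : ∑ x ∈ E, |Stmt14.PP M ξ x - Stmt14.PP M η x| ≤ ∑ x ∈ E, |ξ x - η x| := by
      rw [hPξ, hPη]
      calc ∑ x ∈ E, |Stmt14.run Stmt14.trM (Stmt14.L2 M E) (Stmt14.run Stmt14.oppM (Stmt14.L1 M E) ξ) x -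
            Stmt14.run Stmt14.trM (Stmt14.L2 M E) (Stmt14.run Stmt14.oppM (Stmt14.L1 M E) η) x|
          ≤ ∑ x ∈ E, |Stmt14.run Stmt14.oppM (Stmt14.L1 M E) ξ x - Stmt14.run Stmt14.oppM (Stmt14.L1 M E) η x| :=
            Stmt14.run_le E (fun f g => ∑ x ∈ E, |f x - g x|) (Stmt14.L2 M E) _ _ hlip2
        _ ≤ ∑ x ∈ E, |ξ x - η x| :=
            Stmt14.run_le E (fun f g => ∑ x ∈ E, |f x - g x|) (Stmt14.L1 M E) _ _ hlip1
    -- convert tsums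
    have ht1 : ∑' h : H, |Stmt14.PP M ξ h - Stmt14.PP M η h| =
        ∑ x ∈ E, |Stmt14.PP M ξ x - Stmt14.PP M η x| := by
      apply tsum_eq_sum
      intro b hb
      have z1 : Stmt14.PP M ξ b = 0 :=
        Stmt14.suppZero (Stmt14.PP_props M ξ hξ).2.1
          (fun hbin => hb (Finset.mem_union.2 (Or.inl hbin)))
      have z2 : Stmt14.PP M η b = 0 :=
        Stmt14.suppZero (Stmt14.PP_props M η hη).2.1
          (fun hbin => hb (Finset.mem_union.2 (Or.inr hbin)))
      rw [z1, z2, sub_zero, abs_zero]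
    have ht2 : ∑' h : H, |ξ h - η h| = ∑ x ∈ E, |ξ x - η x| := by
      apply tsum_eq_sum
      intro b hb
      have z1 : ξ b = 0 :=
        Stmt14.suppZero (Stmt14.suppIn_S0 M ξ hξ)
          (fun hbin => hb (Finset.mem_union.2 (Or.inl hbin)))
      have z2 : η b = 0 :=
        Stmt14.suppZero (Stmt14.suppIn_S0 M η hη)
          (fun hbin => hb (Finset.mem_union.2 (Or.inr hbin)))
      rw [z1, z2, sub_zero, abs_zero]
    rw [ht1, ht2]
    exact key
  · -- identity on A
    intro ξ hξ hi ha
    rw [Stmt14.PP_eq M ξ hξ]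
    have r1 : Stmt14.run Stmt14.oppM (Stmt14.L1 M (Stmt14.S0 M ξ hξ)) ξ = ξ := by
      apply Stmt14.run_id
      intro q hq
      exact Stmt14.oppM_eq_self (fun x => (hξ.1 x).1) (hi q.1 q.2 ((Stmt14.mem_L1 M).1 hq).2)
    rw [r1]
    apply Stmt14.run_id
    intro q hq
    rcases ha q.1 q.2 ((Stmt14.mem_L2 M).1 hq).2 with h1 | h0
    · exact Stmt14.trM_eq_self_of_one hξ.1 h1
    · exact Stmt14.trM_eq_self_of_zero hξ.1 h0
  · -- norm preservation on intervalic points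
    intro ξ hξ hi
    set S := Stmt14.S0 M ξ hξ with hS
    have r1 : Stmt14.run Stmt14.oppM (Stmt14.L1 M S) ξ = ξ := by
      apply Stmt14.run_id
      intro q hq
      exact Stmt14.oppM_eq_self (fun x => (hξ.1 x).1) (hi q.1 q.2 ((Stmt14.mem_L1 M).1 hq).2)
    have hsum : ∑ x ∈ S, Stmt14.PP M ξ x = ∑ x ∈ S, ξ x := by
      rw [Stmt14.PP_eq M ξ hξ, r1]
      apply Stmt14.run_sum
      intro q hq g
      obtain ⟨⟨h1, h2⟩, hlt⟩ := (Stmt14.mem_L2 M).1 hq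
      have hne : q.1 ≠ q.2 := fun e =>
        Stmt14.lt_irrefl3 M q.1 (by rw [show q.2 = q.1 from e.symm] at hlt; exact hlt)
      exact Stmt14.trM_sum S h1 h2 hne g
    obtain ⟨hb2, hs2, -, -⟩ := Stmt14.PP_props M ξ hξ
    have ht1 : ∑' h : H, |Stmt14.PP M ξ h| = ∑ x ∈ S, |Stmt14.PP M ξ x| := by
      apply tsum_eq_sum
      intro b hb
      rw [Stmt14.suppZero hs2 hb, abs_zero]
    have ht2 : ∑' h : H, |ξ h| = ∑ x ∈ S, |ξ x| := by
      apply tsum_eq_sum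
      intro b hb
      rw [Stmt14.suppZero (Stmt14.suppIn_S0 M ξ hξ) hb, abs_zero]
    rw [ht1, ht2]
    calc ∑ x ∈ S, |Stmt14.PP M ξ x| = ∑ x ∈ S, Stmt14.PP M ξ x :=
          Finset.sum_congr rfl fun x _ => abs_of_nonneg (hb2 x).1
      _ = ∑ x ∈ S, ξ x := hsum
      _ = ∑ x ∈ S, |ξ x| := (Finset.sum_congr rfl fun x _ => (abs_of_nonneg (hξ.1 x).1).symm)
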